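/- For a cost vector c ∈ ℝ_{>0}^n, the allocation x_i = c_i^{-α} / Σ_j c_j^{-α} minimizes the objective Σ_i c_i x_i^{1+1/α} over all vectors x ∈ [0,1]^n with Σ_i x_i = 1. -/

import Mathlib

open Finset

/-- Convexity tangent-line inequality: for `a > 0`, `b ≥ 0`, `p ≥ 1`,
    `a^p + p * a^(p-1) * (b - a) ≤ b^p`. -/
lemma rpow_tangent_line {a b p : ℝ} (ha : 0 < a) (hb : 0 ≤ b) (hp : 1 ≤ p) :
    a ^ p + p * a ^ (p - 1) * (b - a) ≤ b ^ p := by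
  have hs : -1 ≤ b / a - 1 := by
    have : 0 ≤ b / a := div_nonneg hb ha.le
    linarith
  have h := one_add_mul_self_le_rpow_one_add hs hp
  have h1a : (1 : ℝ) + (b / a - 1) = b / a := by ring
  rw [h1a] at h
  have h2 : (b / a) ^ p = b ^ p / a ^ p := Real.div_rpow hb ha.le p
  rw [h2] at h
  have hap : (0:ℝ) < a ^ p := Real.rpow_pos_of_pos ha p
  have h3 := mul_le_mul_of_nonneg_left h hap.le
  calc a ^ p + p * a ^ (p - 1) * (b - a)
      = a ^ p * (1 + p * (b / a - 1)) := by
        have haa : a ^ (p - 1) = a ^ p / a := by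
          rw [Real.rpow_sub ha, Real.rpow_one]
        rw [haa]; field_simp
    _ ≤ a ^ p * (b ^ p / a ^ p) := h3
    _ = b ^ p := by field_simp

theorem alpha_par_minimizes
    (n : ℕ) (hn : 1 ≤ n) (α : ℝ) (hα : 0 < α)
    (c : Fin n → ℝ) (hc : ∀ i, 0 < c i)
    (x : Fin n → ℝ)
    (hx : ∀ i, x i = c i ^ (-α) / ∑ j, c j ^ (-α))
    (y : Fin n → ℝ) (hy0 : ∀ i, 0 ≤ y i) (hy1 : ∀ i, y i ≤ 1)
    (hysum : ∑ i, y i = 1) :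
    ∑ i, c i * x i ^ (1 + 1/α) ≤ ∑ i, c i * y i ^ (1 + 1/α) := by
  set S : ℝ := ∑ j, c j ^ (-α) with hS
  have hne : (Finset.univ : Finset (Fin n)).Nonempty := by
    rw [Finset.univ_nonempty_iff]
    exact Fin.pos_iff_nonempty.mp hn
  have hSpos : 0 < S :=
    Finset.sum_pos (fun j _ => Real.rpow_pos_of_pos (hc j) _) hne
  have hxpos : ∀ i, 0 < x i := fun i => by
    rw [hx i]; exact div_pos (Real.rpow_pos_of_pos (hc i) _) hSpos
  have hxsum : ∑ i, x i = 1 := by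
    rw [Finset.sum_congr rfl fun i _ => hx i, ← Finset.sum_div, ← hS,
      div_self hSpos.ne']
  have hp : (1:ℝ) ≤ 1 + 1/α := by
    have : 0 < 1/α := by positivity
    linarith
  have hpm1 : (1 + 1/α) - 1 = (1:ℝ)/α := by ring
  -- c i * x i ^ (1/α) is the constant S^(-1/α)
  have hconst : ∀ i, c i * x i ^ ((1:ℝ)/α) = S ^ (-(1/α)) := by
    intro i
    rw [hx i, Real.div_rpow (Real.rpow_pos_of_pos (hc i) _).le hSpos.le,
      ← Real.rpow_mul (hc i).le]
    have hαα : -α * (1/α) = -1 := by field_simp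
    rw [hαα, Real.rpow_neg_one, Real.rpow_neg hSpos.le]
    field_simp
    exact div_self (hc i).ne'
  have key : ∀ i, c i * x i ^ (1 + 1/α)
      + (1 + 1/α) * S ^ (-(1/α)) * (y i - x i) ≤ c i * y i ^ (1 + 1/α) := by
    intro i
    have h := rpow_tangent_line (hxpos i) (hy0 i) hp
    have h2 := mul_le_mul_of_nonneg_left h (hc i).le
    calc c i * x i ^ (1 + 1/α) + (1 + 1/α) * S ^ (-(1/α)) * (y i - x i)
        = c i * (x i ^ (1 + 1/α)
            + (1 + 1/α) * x i ^ ((1 + 1/α) - 1) * (y i - x i)) := by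
          rw [hpm1]
          linear_combination -(1 + 1/α) * (y i - x i) * hconst i
      _ ≤ c i * y i ^ (1 + 1/α) := h2
  calc ∑ i, c i * x i ^ (1 + 1/α)
      = ∑ i, (c i * x i ^ (1 + 1/α)
          + (1 + 1/α) * S ^ (-(1/α)) * (y i - x i)) := by
        rw [Finset.sum_add_distrib, ← Finset.mul_sum, Finset.sum_sub_distrib,
          hysum, hxsum]
        ring
    _ ≤ ∑ i, c i * y i ^ (1 + 1/α) := Finset.sum_le_sum fun i _ => key i
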